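/- Fix Λ ≥ 1 and q > 0. There exist a constant C = C(Λ, q) > 0 and an integer M such that for all m ≥ M the following holds. Let L and R be disjoint finite sets with |L| = m and m ≤ |R| = ℓ ≤ Λ·m, and let H be the random bipartite graph on L ∪ R in which each of the m·ℓ pairs (u,v) ∈ L×R is an edge independently with probability p ∈ (0,1]. If p·ℓ ≥ C·log m, then with probability at least 1 − m^{−q}, H contains a matching saturating L, i.e. an injection φ : L → R such that {u, φ(u)} is an edge of H for every u ∈ L. -/

import Mathlib

open MeasureTheory Real

namespace BipMatch

/-- Bernoulli measure on `Bool` with success probability `p` (clamped to `[0,1]`). -/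
noncomputable def bern (p : ℝ) : Measure Bool :=
  (PMF.bernoulli (min (Real.toNNReal p) 1) (min_le_right _ _)).toMeasure

instance (p : ℝ) : IsProbabilityMeasure (bern p) := PMF.toMeasure.isProbabilityMeasure _

/-- The law of the random bipartite graph on parts `Fin m` and `Fin l`: each of the `m·l`
pairs is an edge independently with probability `p`. -/
noncomputable def bipartite (m l : ℕ) (p : ℝ) : Measure (Fin m × Fin l → Bool) :=
  Measure.pi (fun _ => bern p)

lemma bern_false {p : ℝ} (hp0 : 0 ≤ p) (hp : p ≤ 1) : bern p {false} = ENNReal.ofReal (1 - p) := by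
  rw [bern, PMF.toMeasure_apply_singleton _ _ (measurableSet_singleton _),
    PMF.bernoulli_apply]
  have h1 : min (Real.toNNReal p) 1 = Real.toNNReal p :=
    min_eq_left (Real.toNNReal_le_one.mpr hp)
  rw [h1, Bool.cond_false, ENNReal.ofReal_sub _ hp0, ENNReal.ofReal_one]
  rw [ENNReal.coe_sub, ENNReal.coe_one, ENNReal.ofReal]

/-- the event that all edges from `S` to the complement of `T` are missing -/
def absent (m l : ℕ) (S : Finset (Fin m)) (T : Finset (Fin l)) : Set (Fin m × Fin l → Bool) :=
  {ω | ∀ u ∈ S, ∀ v, v ∉ T → ω (u, v) = false}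

lemma measure_absent (m l : ℕ) (p : ℝ) (hp0 : 0 ≤ p) (hp : p ≤ 1)
    (S : Finset (Fin m)) (T : Finset (Fin l)) :
    bipartite m l p (absent m l S T) =
      ENNReal.ofReal (1 - p) ^ (S.card * (l - T.card)) := by
  classical
  have hset : absent m l S T = Set.pi Set.univ
      (fun i : Fin m × Fin l => if i.1 ∈ S ∧ i.2 ∉ T then ({false} : Set Bool) else Set.univ) := by
    ext ω
    simp only [absent, Set.mem_setOf_eq, Set.mem_pi, Set.mem_univ, forall_true_left]
    constructor
    · intro h i
      by_cases hi : i.1 ∈ S ∧ i.2 ∉ T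
      · simp only [hi, if_true, Set.mem_singleton_iff]
        exact h i.1 hi.1 i.2 hi.2
      · simp [hi]
    · intro h u hu v hv
      have := h (u, v)
      simp only [hu, hv, not_false_iff, and_self, if_true, Set.mem_singleton_iff] at this
      exact this
  rw [hset, bipartite, Measure.pi_pi]
  have : ∀ i : Fin m × Fin l,
      bern p (if i.1 ∈ S ∧ i.2 ∉ T then ({false} : Set Bool) else Set.univ) =
      if i.1 ∈ S ∧ i.2 ∉ T then ENNReal.ofReal (1 - p) else 1 := by
    intro i
    split_ifs with h
    · exact bern_false hp0 hp
    · exact measure_univ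
  simp_rw [this]
  rw [Finset.prod_ite, Finset.prod_const, Finset.prod_const, one_pow, mul_one]
  congr 1
  have : (Finset.univ.filter fun i : Fin m × Fin l => i.1 ∈ S ∧ i.2 ∉ T) = S ×ˢ Tᶜ := by
    ext ⟨u, v⟩
    simp [Finset.mem_product]
  rw [this, Finset.card_product, Finset.card_compl, Fintype.card_fin]

lemma coverage (m l : ℕ) (hml : m ≤ l) :
    {ω : Fin m × Fin l → Bool |
        ∃ φ : Fin m → Fin l, Function.Injective φ ∧ ∀ u, ω (u, φ u) = true}ᶜ ⊆
      ⋃ s ∈ Finset.Icc 1 m, ⋃ S ∈ Finset.powersetCard s (Finset.univ : Finset (Fin m)),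
        ⋃ T ∈ Finset.powersetCard (s - 1) (Finset.univ : Finset (Fin l)), absent m l S T := by
  classical
  intro ω hω
  simp only [Set.mem_compl_iff, Set.mem_setOf_eq] at hω
  set t : Fin m → Finset (Fin l) := fun u => Finset.univ.filter fun v => ω (u, v) = true with ht
  have hhall : ¬ ∀ S : Finset (Fin m), S.card ≤ (S.biUnion t).card := by
    intro h
    obtain ⟨f, hf, hft⟩ := (Finset.all_card_le_biUnion_card_iff_exists_injective t).mp h
    exact hω ⟨f, hf, fun u => by simpa [ht] using hft u⟩
  push_neg at hhall
  obtain ⟨S, hS⟩ := hhall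
  set s := S.card with hs
  have hs1 : 1 ≤ s := by omega
  have hsm : s ≤ m := by
    simpa using Finset.card_le_univ S
  have hNcard : (S.biUnion t).card ≤ s - 1 := by omega
  obtain ⟨T, hNT, _, hTcard⟩ := Finset.exists_subsuperset_card_eq
    (Finset.subset_univ (S.biUnion t)) hNcard (by simp; omega)
  refine Set.mem_biUnion (Finset.mem_Icc.mpr ⟨hs1, hsm⟩) ?_
  refine Set.mem_biUnion (Finset.mem_powersetCard_univ.mpr hs.symm) ?_
  refine Set.mem_biUnion (Finset.mem_powersetCard_univ.mpr hTcard) ?_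
  intro u hu v hv
  have hvN : v ∉ S.biUnion t := fun hvv => hv (hNT hvv)
  have : v ∉ t u := fun hvv => hvN (Finset.mem_biUnion.mpr ⟨u, hu, hvv⟩)
  simp only [ht, Finset.mem_filter, Finset.mem_univ, true_and] at this
  simpa using this

lemma choose_bound (m l s : ℕ) (hml : m ≤ l) (hs1 : 1 ≤ s) (hsm : s ≤ m) :
    m.choose s * l.choose (s - 1) ≤ l ^ (2 * min s (l - s + 1)) := by
  have hsl : s ≤ l := hsm.trans hml
  have hl1 : 1 ≤ l := hs1.trans hsl
  rcases le_total s (l - s + 1) with h | h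
  · have h1 : m.choose s ≤ l ^ s :=
      (Nat.choose_le_pow m s).trans (Nat.pow_le_pow_left hml s)
    have h2 : l.choose (s - 1) ≤ l ^ s :=
      (Nat.choose_le_pow l (s - 1)).trans (Nat.pow_le_pow_right hl1 (by omega))
    calc m.choose s * l.choose (s - 1) ≤ l ^ s * l ^ s := Nat.mul_le_mul h1 h2
      _ = l ^ (2 * min s (l - s + 1)) := by rw [← pow_add, min_eq_left h]; ring_nf
  · have hk : min s (l - s + 1) = l - s + 1 := min_eq_right h
    have h1 : m.choose s ≤ l ^ (l - s + 1) := by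
      rw [← Nat.choose_symm hsm]
      exact (Nat.choose_le_pow m (m - s)).trans
        ((Nat.pow_le_pow_left hml _).trans (Nat.pow_le_pow_right hl1 (by omega)))
    have h2 : l.choose (s - 1) ≤ l ^ (l - s + 1) := by
      rw [← Nat.choose_symm (by omega : s - 1 ≤ l)]
      have : l - (s - 1) = l - s + 1 := by omega
      rw [this]
      exact Nat.choose_le_pow l (l - s + 1)
    calc m.choose s * l.choose (s - 1) ≤ l ^ (l - s + 1) * l ^ (l - s + 1) :=
        Nat.mul_le_mul h1 h2
      _ = l ^ (2 * min s (l - s + 1)) := by rw [← pow_add, hk]; ring_nf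

lemma kl_le (l s : ℕ) (hsl : s ≤ l) :
    min s (l - s + 1) * l ≤ 2 * (s * (l - s + 1)) := by
  have hmm : min s (l - s + 1) * max s (l - s + 1) = s * (l - s + 1) := min_mul_max _ _
  have h2 : l ≤ 2 * max s (l - s + 1) := by
    have h3 : s ≤ max s (l - s + 1) := le_max_left _ _
    have h4 : l - s + 1 ≤ max s (l - s + 1) := le_max_right _ _
    omega
  calc min s (l - s + 1) * l ≤ min s (l - s + 1) * (2 * max s (l - s + 1)) :=
      Nat.mul_le_mul_left _ h2
    _ = 2 * (s * (l - s + 1)) := by rw [← hmm]; ring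

lemma numeric (m l s : ℕ) (q Λ : ℝ) (hq : 0 < q) (hm2 : 2 ≤ m) (hΛm : Λ ≤ (m : ℝ))
    (hml : m ≤ l) (hlΛ : (l : ℝ) ≤ Λ * m) (p : ℝ) (hp0 : 0 < p) (hp1 : p ≤ 1)
    (hC : (2 * q + 12) * Real.log m ≤ p * l) (hs1 : 1 ≤ s) (hsm : s ≤ m) :
    (m.choose s : ℝ) * (l.choose (s - 1)) * (1 - p) ^ (s * (l - s + 1)) ≤
      (m : ℝ) ^ (-(q + 2)) := by
  have hsl : s ≤ l := hsm.trans hml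
  set k := min s (l - s + 1) with hkdef
  have hk1 : 1 ≤ k := by
    have : 1 ≤ l - s + 1 := by omega
    omega
  have hm0 : (0 : ℝ) < m := by exact_mod_cast (by omega : 0 < m)
  have hm1 : (1 : ℝ) ≤ m := by exact_mod_cast (by omega : 1 ≤ m)
  have hlogm : 0 ≤ Real.log m := Real.log_nonneg hm1
  have h1p : (0 : ℝ) ≤ 1 - p := by linarith
  set N := s * (l - s + 1) with hNdef
  -- step 1 : binomials
  have hA : (m.choose s : ℝ) * (l.choose (s - 1)) ≤ (m : ℝ) ^ (4 * k) := by
    have h1 : ((m.choose s * l.choose (s - 1) : ℕ) : ℝ) ≤ ((l ^ (2 * k) : ℕ) : ℝ) := by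
      exact_mod_cast choose_bound m l s hml hs1 hsm
    push_cast at h1
    refine h1.trans ?_
    have hlm2 : (l : ℝ) ≤ (m : ℝ) ^ 2 := by
      calc (l : ℝ) ≤ Λ * m := hlΛ
        _ ≤ (m : ℝ) * m := by
            apply mul_le_mul_of_nonneg_right hΛm (by positivity)
        _ = (m : ℝ) ^ 2 := by ring
    calc (l : ℝ) ^ (2 * k) ≤ ((m : ℝ) ^ 2) ^ (2 * k) :=
        pow_le_pow_left₀ (by positivity) hlm2 _
      _ = (m : ℝ) ^ (4 * k) := by rw [← pow_mul]; ring_nf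
  -- step 2 : probability term
  have hB : (1 - p) ^ N ≤ ((m : ℝ) ^ (-(q + 6))) ^ k := by
    have e1 : (1 - p) ^ N ≤ rexp (-p) ^ N :=
      pow_le_pow_left₀ h1p (by linarith [add_one_le_exp (-p)]) N
    have e2 : rexp (-p) ^ N = rexp (-(p * N)) := by
      rw [← Real.exp_nat_mul]; ring_nf
    have e3 : rexp (-(p * N)) ≤ rexp ((k : ℝ) * (-(p * l / 2))) := by
      apply Real.exp_le_exp.mpr
      have hkl : ((k * l : ℕ) : ℝ) ≤ ((2 * N : ℕ) : ℝ) := by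
        exact_mod_cast kl_le l s hsl
      push_cast at hkl
      nlinarith [hp0.le]
    have e4 : rexp ((k : ℝ) * (-(p * l / 2))) = rexp (-(p * l / 2)) ^ k :=
      Real.exp_nat_mul _ k
    have e5 : rexp (-(p * l / 2)) ≤ (m : ℝ) ^ (-(q + 6)) := by
      rw [Real.rpow_def_of_pos hm0]
      apply Real.exp_le_exp.mpr
      nlinarith
    calc (1 - p) ^ N ≤ rexp (-p) ^ N := e1
      _ = rexp (-(p * N)) := e2
      _ ≤ rexp ((k : ℝ) * (-(p * l / 2))) := e3
      _ = rexp (-(p * l / 2)) ^ k := e4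
      _ ≤ ((m : ℝ) ^ (-(q + 6))) ^ k := pow_le_pow_left₀ (Real.exp_nonneg _) e5 k
  calc (m.choose s : ℝ) * (l.choose (s - 1)) * (1 - p) ^ N
      ≤ (m : ℝ) ^ (4 * k) * ((m : ℝ) ^ (-(q + 6))) ^ k := by
        apply mul_le_mul hA hB (by positivity) (by positivity)
    _ = (m : ℝ) ^ ((-(q + 2)) * k) := by
        rw [← Real.rpow_natCast (m : ℝ) (4 * k), ← Real.rpow_natCast ((m : ℝ) ^ (-(q + 6))) k,
          ← Real.rpow_mul hm0.le, ← Real.rpow_add hm0]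
        congr 1
        push_cast
        ring
    _ ≤ (m : ℝ) ^ (-(q + 2)) := by
        apply Real.rpow_le_rpow_of_exponent_le hm1
        have hk1' : (1 : ℝ) ≤ k := by exact_mod_cast hk1
        nlinarith

theorem bipartite_matching (Λ q : ℝ) (hΛ : 1 ≤ Λ) (hq : 0 < q) :
    ∃ C : ℝ, 0 < C ∧ ∃ M : ℕ, ∀ m : ℕ, M ≤ m → ∀ l : ℕ, m ≤ l → (l : ℝ) ≤ Λ * m →
      ∀ p : ℝ, 0 < p → p ≤ 1 → C * Real.log m ≤ p * l →
      ENNReal.ofReal (1 - (m : ℝ) ^ (-q)) ≤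
        bipartite m l p
          {ω | ∃ φ : Fin m → Fin l, Function.Injective φ ∧ ∀ u, ω (u, φ u) = true} := by
  classical
  refine ⟨2 * q + 12, by linarith, ⌈Λ⌉₊ + 2, ?_⟩
  intro m hm l hml hlΛ p hp0 hp1 hC
  have hm2 : 2 ≤ m := by omega
  have hΛm : Λ ≤ (m : ℝ) := by
    calc Λ ≤ (⌈Λ⌉₊ : ℝ) := Nat.le_ceil Λ
      _ ≤ m := by exact_mod_cast (by omega : ⌈Λ⌉₊ ≤ m)
  have hm0 : (0 : ℝ) < m := by exact_mod_cast (by omega : 0 < m)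
  have hm1 : (1 : ℝ) ≤ m := by exact_mod_cast (by omega : 1 ≤ m)
  have h1p : (0 : ℝ) ≤ 1 - p := by linarith
  set μ := bipartite m l p with hμ
  set tgt : Set (Fin m × Fin l → Bool) :=
    {ω | ∃ φ : Fin m → Fin l, Function.Injective φ ∧ ∀ u, ω (u, φ u) = true} with htgt
  -- the union bound
  have hcompl : μ tgtᶜ ≤ ENNReal.ofReal ((m : ℝ) ^ (-q)) := by
    have hbd : μ tgtᶜ ≤
        ∑ s ∈ Finset.Icc 1 m, ∑ S ∈ Finset.powersetCard s (Finset.univ : Finset (Fin m)),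
          ∑ T ∈ Finset.powersetCard (s - 1) (Finset.univ : Finset (Fin l)),
            μ (absent m l S T) := by
      refine (measure_mono (coverage m l hml)).trans ?_
      refine (measure_biUnion_finset_le _ _).trans ?_
      refine Finset.sum_le_sum fun s _ => ?_
      refine (measure_biUnion_finset_le _ _).trans ?_
      exact Finset.sum_le_sum fun S _ => measure_biUnion_finset_le _ _
    refine hbd.trans ?_
    have hterm : ∀ s ∈ Finset.Icc 1 m,
        (∑ S ∈ Finset.powersetCard s (Finset.univ : Finset (Fin m)),
          ∑ T ∈ Finset.powersetCard (s - 1) (Finset.univ : Finset (Fin l)),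
            μ (absent m l S T)) ≤ ENNReal.ofReal ((m : ℝ) ^ (-(q + 2))) := by
      intro s hs
      rw [Finset.mem_Icc] at hs
      obtain ⟨hs1, hsm⟩ := hs
      have hsl : s ≤ l := hsm.trans hml
      have hval : ∀ S ∈ Finset.powersetCard s (Finset.univ : Finset (Fin m)),
          ∀ T ∈ Finset.powersetCard (s - 1) (Finset.univ : Finset (Fin l)),
          μ (absent m l S T) = ENNReal.ofReal ((1 - p) ^ (s * (l - s + 1))) := by
        intro S hS T hT
        have hScard : S.card = s := Finset.mem_powersetCard_univ.mp hS
        have hTcard : T.card = s - 1 := Finset.mem_powersetCard_univ.mp hT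
        rw [hμ, measure_absent m l p hp0.le hp1, hScard, hTcard,
          ← ENNReal.ofReal_pow h1p]
        have hls : l - (s - 1) = l - s + 1 := by omega
        rw [hls]
      calc (∑ S ∈ Finset.powersetCard s (Finset.univ : Finset (Fin m)),
            ∑ T ∈ Finset.powersetCard (s - 1) (Finset.univ : Finset (Fin l)),
              μ (absent m l S T))
          = (m.choose s) * ((l.choose (s - 1)) *
              ENNReal.ofReal ((1 - p) ^ (s * (l - s + 1)))) := by
            rw [Finset.sum_congr rfl fun S hS => Finset.sum_congr rfl (hval S hS)]
            simp [Finset.sum_const, Finset.card_powersetCard, mul_assoc]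
        _ ≤ ENNReal.ofReal ((m : ℝ) ^ (-(q + 2))) := by
            rw [← ENNReal.ofReal_natCast (m.choose s), ← ENNReal.ofReal_natCast (l.choose (s - 1)),
              ← ENNReal.ofReal_mul (by positivity), ← ENNReal.ofReal_mul (by positivity)]
            refine ENNReal.ofReal_le_ofReal ?_
            rw [← mul_assoc]
            exact numeric m l s q Λ hq hm2 hΛm hml hlΛ p hp0 hp1 hC hs1 hsm
    refine (Finset.sum_le_sum hterm).trans ?_
    rw [Finset.sum_const, Nat.card_Icc]
    simp only [Nat.add_sub_cancel, nsmul_eq_mul]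
    rw [← ENNReal.ofReal_natCast m, ← ENNReal.ofReal_mul (by positivity)]
    refine ENNReal.ofReal_le_ofReal ?_
    calc (m : ℝ) * (m : ℝ) ^ (-(q + 2)) = (m : ℝ) ^ ((1 : ℝ) + -(q + 2)) := by
          rw [Real.rpow_add hm0, Real.rpow_one]
      _ ≤ (m : ℝ) ^ (-q) := by
          apply Real.rpow_le_rpow_of_exponent_le hm1
          linarith
  -- conclude
  have huniv : μ Set.univ = 1 := by
    rw [hμ, bipartite, Measure.pi_univ]
    simp only [measure_univ, Finset.prod_const, one_pow]
  have hsum : (1 : ENNReal) ≤ μ tgt + μ tgtᶜ := by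
    rw [← huniv, ← Set.union_compl_self tgt]
    exact measure_union_le _ _
  have : ENNReal.ofReal (1 - (m : ℝ) ^ (-q)) ≤ 1 - μ tgtᶜ := by
    rw [ENNReal.ofReal_sub _ (by positivity), ENNReal.ofReal_one]
    exact tsub_le_tsub_left hcompl 1
  refine this.trans ?_
  rw [tsub_le_iff_right]
  exact hsum

end BipMatch
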